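/- arXiv:2601.19070 — 3 statements merged into one kernel-verified Lean document; each statement's English description precedes it below -/
import Mathlib

section
/- Let W ∈ L²(ℤ_p × ℤ_p), W_in ∈ L²(ℤ_p × ℤ_p), x ∈ L²(ℤ_p), ξ ∈ L²(ℤ_p), and let φ : ℝ → ℝ be Lipschitz with constant L_φ and φ(0) = 0. If 0 < L_φ ‖W‖₂ < 1, then there exists a unique h ∈ L²(ℤ_p) satisfying h(u) = ∫_{ℤ_p} W(u,y) φ(h(y)) dμ(y) + ∫_{ℤ_p} W_in(u,y) x(y) dμ(y) + ξ(u) for μ-almost every u ∈ ℤ_p. -/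
open MeasureTheory
open scoped NNReal ENNReal

noncomputable instance (p : ℕ) [Fact p.Prime] : MeasurableSpace ℤ_[p] := borel _
instance (p : ℕ) [Fact p.Prime] : BorelSpace ℤ_[p] := ⟨rfl⟩

/-- The normalized Haar measure on the compact additive group `ℤ_[p]`
(so that `padicHaar p Set.univ = 1`). -/
noncomputable def padicHaar (p : ℕ) [Fact p.Prime] : Measure ℤ_[p] :=
  Measure.addHaarMeasure (⊤ : TopologicalSpace.PositiveCompacts ℤ_[p])

instance padicHaar_isFiniteMeasure (p : ℕ) [Fact p.Prime] :
    IsFiniteMeasure (padicHaar p) := by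
  constructor
  rw [padicHaar, ← TopologicalSpace.PositiveCompacts.coe_top (α := ℤ_[p]),
    Measure.addHaarMeasure_self]
  exact ENNReal.one_lt_top

section Aux

variable {α β : Type*} [MeasurableSpace α] [MeasurableSpace β] {μ : Measure α} {ν : Measure β}

lemma sq_eLpNorm_two (ν : Measure β) (f : β → ℝ) :
    eLpNorm f 2 ν ^ (2 : ℝ) = ∫⁻ y, (‖f y‖₊ : ℝ≥0∞) ^ (2 : ℝ) ∂ν := by
  rw [eLpNorm_eq_lintegral_rpow_enorm_toReal two_ne_zero ENNReal.ofNat_ne_top, ← ENNReal.rpow_mul]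
  norm_num
  rfl

lemma lintegral_sq_section_lt_top [SFinite ν] {K : α × β → ℝ}
    (hK : MemLp K 2 (μ.prod ν)) :
    ∀ᵐ u ∂μ, ∫⁻ y, (‖K (u, y)‖₊ : ℝ≥0∞) ^ (2 : ℝ) ∂ν < ∞ := by
  set Km := hK.1.mk K with hKm
  have hmeas : Measurable Km := hK.1.stronglyMeasurable_mk.measurable
  have hae : ∀ᵐ u ∂μ, ∀ᵐ y ∂ν, K (u, y) = Km (u, y) := Measure.ae_ae_of_ae_prod hK.1.ae_eq_mk
  have hfin : ∫⁻ u, ∫⁻ y, (‖Km (u, y)‖₊ : ℝ≥0∞) ^ (2 : ℝ) ∂ν ∂μ < ∞ := by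
    rw [← lintegral_prod _ (hmeas.nnnorm.coe_nnreal_ennreal.pow_const _).aemeasurable]
    calc ∫⁻ z, (‖Km z‖₊ : ℝ≥0∞) ^ (2 : ℝ) ∂(μ.prod ν)
        = eLpNorm Km 2 (μ.prod ν) ^ (2 : ℝ) := (sq_eLpNorm_two _ _).symm
      _ < ∞ := by
          rw [← eLpNorm_congr_ae hK.1.ae_eq_mk]
          exact ENNReal.rpow_lt_top_of_nonneg (by norm_num) hK.2.ne
  filter_upwards [hae, ae_lt_top (hmeas.enorm.pow_const _).lintegral_prod_right' hfin.ne]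
    with u h1 h2
  calc ∫⁻ y, (‖K (u, y)‖₊ : ℝ≥0∞) ^ (2 : ℝ) ∂ν
      = ∫⁻ y, (‖Km (u, y)‖₊ : ℝ≥0∞) ^ (2 : ℝ) ∂ν :=
        lintegral_congr_ae (h1.mono fun y hy => by simp only [hy])
    _ < ∞ := h2

lemma ae_section_memℒp [SFinite ν] {K : α × β → ℝ} (hK : MemLp K 2 (μ.prod ν)) :
    ∀ᵐ u ∂μ, MemLp (fun y => K (u, y)) 2 ν := by
  filter_upwards [hK.1.prodMk_left, lintegral_sq_section_lt_top hK] with u h1 h2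
  refine ⟨h1, ?_⟩
  rw [eLpNorm_eq_lintegral_rpow_enorm_toReal two_ne_zero ENNReal.ofNat_ne_top]
  simp only [ENNReal.toReal_ofNat]
  exact ENNReal.rpow_lt_top_of_nonneg (by norm_num) h2.ne

lemma ae_integrable_mul [SFinite ν] {K : α × β → ℝ} {f : β → ℝ}
    (hK : MemLp K 2 (μ.prod ν)) (hf : MemLp f 2 ν) :
    ∀ᵐ u ∂μ, Integrable (fun y => K (u, y) * f y) ν := by
  filter_upwards [ae_section_memℒp hK] with u hu
  have h : MemLp ((fun y => K (u, y)) • f) 1 ν :=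
    hf.smul hu (hpqr := ⟨by norm_num [ENNReal.inv_two_add_inv_two]⟩)
  exact memLp_one_iff_integrable.mp h

lemma hs_bound [SFinite μ] [SFinite ν] {K : α × β → ℝ} {f : β → ℝ}
    (hK : MemLp K 2 (μ.prod ν)) (hf : MemLp f 2 ν) :
    MemLp (fun u => ∫ y, K (u, y) * f y ∂ν) 2 μ ∧
      eLpNorm (fun u => ∫ y, K (u, y) * f y ∂ν) 2 μ
        ≤ eLpNorm K 2 (μ.prod ν) * eLpNorm f 2 ν := by
  have hKf : AEStronglyMeasurable (fun z : α × β => K z * f z.2) (μ.prod ν) :=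
    hK.1.mul (hf.1.comp_quasiMeasurePreserving Measure.quasiMeasurePreserving_snd)
  have hmeas : AEStronglyMeasurable (fun u => ∫ y, K (u, y) * f y ∂ν) μ :=
    hKf.integral_prod_right'
  have hpt : ∀ᵐ u ∂μ, (‖∫ y, K (u, y) * f y ∂ν‖₊ : ℝ≥0∞) ^ (2 : ℝ)
      ≤ (∫⁻ y, (‖K (u, y)‖₊ : ℝ≥0∞) ^ (2 : ℝ) ∂ν) * eLpNorm f 2 ν ^ (2 : ℝ) := by
    filter_upwards [hK.1.prodMk_left] with u hu
    have h1 : (‖∫ y, K (u, y) * f y ∂ν‖₊ : ℝ≥0∞)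
        ≤ ∫⁻ y, (‖K (u, y)‖₊ : ℝ≥0∞) * (‖f y‖₊ : ℝ≥0∞) ∂ν := by
      refine (enorm_integral_le_lintegral_enorm _).trans_eq ?_
      simp_rw [enorm_mul, enorm_eq_nnnorm]
    have h2 : ∫⁻ y, (‖K (u, y)‖₊ : ℝ≥0∞) * (‖f y‖₊ : ℝ≥0∞) ∂ν
        ≤ (∫⁻ y, (‖K (u, y)‖₊ : ℝ≥0∞) ^ (2 : ℝ) ∂ν) ^ (1 / 2 : ℝ) *
          (∫⁻ y, (‖f y‖₊ : ℝ≥0∞) ^ (2 : ℝ) ∂ν) ^ (1 / 2 : ℝ) :=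
      ENNReal.lintegral_mul_le_Lp_mul_Lq ν Real.HolderConjugate.two_two
        hu.aemeasurable.enorm hf.1.aemeasurable.enorm
    calc (‖∫ y, K (u, y) * f y ∂ν‖₊ : ℝ≥0∞) ^ (2 : ℝ)
        ≤ ((∫⁻ y, (‖K (u, y)‖₊ : ℝ≥0∞) ^ (2 : ℝ) ∂ν) ^ (1 / 2 : ℝ) *
          (∫⁻ y, (‖f y‖₊ : ℝ≥0∞) ^ (2 : ℝ) ∂ν) ^ (1 / 2 : ℝ)) ^ (2 : ℝ) :=
          ENNReal.rpow_le_rpow (h1.trans h2) (by norm_num)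
      _ = (∫⁻ y, (‖K (u, y)‖₊ : ℝ≥0∞) ^ (2 : ℝ) ∂ν) *
          (∫⁻ y, (‖f y‖₊ : ℝ≥0∞) ^ (2 : ℝ) ∂ν) := by
          rw [ENNReal.mul_rpow_of_nonneg _ _ (by norm_num : (0:ℝ) ≤ 2),
            ← ENNReal.rpow_mul, ← ENNReal.rpow_mul]
          norm_num
      _ = (∫⁻ y, (‖K (u, y)‖₊ : ℝ≥0∞) ^ (2 : ℝ) ∂ν) * eLpNorm f 2 ν ^ (2 : ℝ) := by
          rw [sq_eLpNorm_two]
  have hbound : eLpNorm (fun u => ∫ y, K (u, y) * f y ∂ν) 2 μ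
      ≤ eLpNorm K 2 (μ.prod ν) * eLpNorm f 2 ν := by
    rw [← ENNReal.rpow_le_rpow_iff (by norm_num : (0:ℝ) < 2), sq_eLpNorm_two,
      ENNReal.mul_rpow_of_nonneg _ _ (by norm_num : (0:ℝ) ≤ 2)]
    calc ∫⁻ u, (‖∫ y, K (u, y) * f y ∂ν‖₊ : ℝ≥0∞) ^ (2 : ℝ) ∂μ
        ≤ ∫⁻ u, (∫⁻ y, (‖K (u, y)‖₊ : ℝ≥0∞) ^ (2 : ℝ) ∂ν) * eLpNorm f 2 ν ^ (2 : ℝ) ∂μ :=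
          lintegral_mono_ae hpt
      _ = eLpNorm f 2 ν ^ (2 : ℝ) * ∫⁻ u, ∫⁻ y, (‖K (u, y)‖₊ : ℝ≥0∞) ^ (2 : ℝ) ∂ν ∂μ := by
          simp_rw [mul_comm]
          exact lintegral_const_mul' _ _
            (ENNReal.rpow_ne_top_of_nonneg (by norm_num) hf.2.ne)
      _ = eLpNorm K 2 (μ.prod ν) ^ (2 : ℝ) * eLpNorm f 2 ν ^ (2 : ℝ) := by
          rw [← lintegral_prod _ (hK.1.aemeasurable.nnnorm.coe_nnreal_ennreal.pow_const _), ← sq_eLpNorm_two, mul_comm]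
  refine ⟨⟨hmeas, hbound.trans_lt (ENNReal.mul_lt_top hK.2 hf.2)⟩, hbound⟩

end Aux

/-- In the contraction regime `0 < Lφ * ‖W‖₂ < 1`, the fixed-point
equation of the p-adic continuous DNN has a unique solution in `L²(ℤ_p)`. -/
theorem stmt_4 (p : ℕ) [Fact p.Prime]
    (W Win : ℤ_[p] × ℤ_[p] → ℝ) (x ξ : ℤ_[p] → ℝ)
    (hW : MemLp W 2 ((padicHaar p).prod (padicHaar p)))
    (hWin : MemLp Win 2 ((padicHaar p).prod (padicHaar p)))
    (hx : MemLp x 2 (padicHaar p)) (hξ : MemLp ξ 2 (padicHaar p))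
    (φ : ℝ → ℝ) (Lφ : ℝ≥0) (hφ : LipschitzWith Lφ φ) (hφ0 : φ 0 = 0)
    (hpos : 0 < (Lφ : ℝ≥0∞) * eLpNorm W 2 ((padicHaar p).prod (padicHaar p)))
    (hlt : (Lφ : ℝ≥0∞) * eLpNorm W 2 ((padicHaar p).prod (padicHaar p)) < 1) :
    ∃! H : Lp ℝ 2 (padicHaar p),
      ∀ᵐ u ∂(padicHaar p),
        H u = ∫ y, W (u, y) * φ (H y) ∂(padicHaar p)
            + ∫ y, Win (u, y) * x y ∂(padicHaar p) + ξ u := by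
  set μ := padicHaar p with hμ
  have hWfin : eLpNorm W 2 (μ.prod μ) ≠ ∞ := hW.2.ne
  set k : ℝ≥0 := Lφ * (eLpNorm W 2 (μ.prod μ)).toNNReal with hk
  have hkcoe : (k : ℝ≥0∞) = (Lφ : ℝ≥0∞) * eLpNorm W 2 (μ.prod μ) := by
    rw [hk, ENNReal.coe_mul, ENNReal.coe_toNNReal hWfin]
  have hk1 : k < 1 := by
    rw [← ENNReal.coe_lt_one_iff, hkcoe]; exact hlt
  have hφH : ∀ H : Lp ℝ 2 μ, MemLp (fun y => φ (H y)) 2 μ := fun H =>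
    hφ.comp_memLp hφ0 (Lp.memLp H)
  let T : Lp ℝ 2 μ → (ℤ_[p] → ℝ) := fun H u =>
    ∫ y, W (u, y) * φ (H y) ∂μ + ∫ y, Win (u, y) * x y ∂μ + ξ u
  have hTmem : ∀ H, MemLp (T H) 2 μ := fun H =>
    ((hs_bound hW (hφH H)).1.add (hs_bound hWin hx).1).add hξ
  let F : Lp ℝ 2 μ → Lp ℝ 2 μ := fun H => (hTmem H).toLp (T H)
  have hFcoe : ∀ H, ⇑(F H) =ᵐ[μ] T H := fun H => (hTmem H).coeFn_toLp
  have hlip : LipschitzWith k F := by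
    intro H₁ H₂
    rw [Lp.edist_def, Lp.edist_def]
    have hd : (⇑(F H₁) - ⇑(F H₂)) =ᵐ[μ]
        fun u => ∫ y, W (u, y) * (φ (H₁ y) - φ (H₂ y)) ∂μ := by
      filter_upwards [hFcoe H₁, hFcoe H₂, ae_integrable_mul hW (hφH H₁),
        ae_integrable_mul hW (hφH H₂)] with u e1 e2 i1 i2
      have he : (fun y => W (u, y) * (φ (H₁ y) - φ (H₂ y)))
          = fun y => W (u, y) * φ (H₁ y) - W (u, y) * φ (H₂ y) := by
        funext y; ring
      rw [Pi.sub_apply, e1, e2, he, integral_sub i1 i2]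
      show T H₁ u - T H₂ u = _
      simp only [T]
      ring
    calc eLpNorm (⇑(F H₁) - ⇑(F H₂)) 2 μ
        = eLpNorm (fun u => ∫ y, W (u, y) * (φ (H₁ y) - φ (H₂ y)) ∂μ) 2 μ :=
          eLpNorm_congr_ae hd
      _ ≤ eLpNorm W 2 (μ.prod μ) * eLpNorm (fun y => φ (H₁ y) - φ (H₂ y)) 2 μ :=
          (hs_bound hW ((hφH H₁).sub (hφH H₂))).2
      _ ≤ eLpNorm W 2 (μ.prod μ) * (Lφ • eLpNorm (⇑H₁ - ⇑H₂) 2 μ) := by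
          gcongr
          refine eLpNorm_le_nnreal_smul_eLpNorm_of_ae_le_mul
            (Filter.Eventually.of_forall fun y => ?_) 2
          rw [Pi.sub_apply, ← nndist_eq_nnnorm, ← nndist_eq_nnnorm]
          exact hφ.nndist_le _ _
      _ = k * eLpNorm (⇑H₁ - ⇑H₂) 2 μ := by
          rw [ENNReal.smul_def, smul_eq_mul, hkcoe]; ring
  have hcon : ContractingWith k F := ⟨hk1, hlip⟩
  have key : ∀ H : Lp ℝ 2 μ, (∀ᵐ u ∂μ, H u = T H u) ↔ F H = H := by
    intro H
    constructor
    · intro h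
      have h2 : (hTmem H).toLp (T H) = (Lp.memLp H).toLp ⇑H :=
        (MemLp.toLp_eq_toLp_iff _ _).mpr (h.mono fun u hu => hu.symm)
      rw [Lp.toLp_coeFn H (Lp.memLp H)] at h2
      exact h2
    · intro h
      have h2 := hFcoe H
      rw [h] at h2
      exact h2
  refine ⟨hcon.fixedPoint F, ?_, ?_⟩
  · exact (key _).mpr hcon.fixedPoint_isFixedPt
  · intro H hH
    exact hcon.fixedPoint_unique ((key H).mp hH)
end

section
/- Let W ∈ L²(ℤ_p × ℤ_p), W_in ∈ L²(ℤ_p × ℤ_p), x ∈ L²(ℤ_p), ξ ∈ L²(ℤ_p), and let φ : ℝ → ℝ be Lipschitz with constant L_φ, φ(0) = 0, and bounded with sup_{s∈ℝ} |φ(s)| ≤ L_φ. If 0 < L_φ ‖W‖₂ < 1, then the unique h ∈ L²(ℤ_p) satisfying h(u) = ∫_{ℤ_p} W(u,y) φ(h(y)) dμ(y) + ∫_{ℤ_p} W_in(u,y) x(y) dμ(y) + ξ(u) almost everywhere satisfies the bound ‖h‖₂ ≤ 1 + ‖W_in‖₂ ‖x‖₂ + ‖ξ‖₂. -/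
open MeasureTheory
open scoped NNReal ENNReal

lemma padicHaar_prob (p : ℕ) [Fact p.Prime] : IsProbabilityMeasure (padicHaar p) :=
  ⟨by
    rw [padicHaar, ← TopologicalSpace.PositiveCompacts.coe_top (α := ℤ_[p])]
    exact Measure.addHaarMeasure_self⟩

lemma aux_aemeasurable_lintegral_prod_right {α β : Type*} [MeasurableSpace α]
    [MeasurableSpace β] (μ : Measure α) (ν : Measure β) [SFinite ν]
    (f : α × β → ℝ≥0∞) (hf : AEMeasurable f (μ.prod ν)) :
    AEMeasurable (fun u => ∫⁻ y, f (u, y) ∂ν) μ := by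
  refine ⟨fun u => ∫⁻ y, hf.mk f (u, y) ∂ν, hf.measurable_mk.lintegral_prod_right', ?_⟩
  filter_upwards [Measure.ae_ae_of_ae_prod hf.ae_eq_mk] with u hu using lintegral_congr_ae hu

/-- Schur-type bound: the operator `v ↦ ∫ K(·,y) v(y)` maps `L²` to `L²` with norm
at most `‖K‖₂`. -/
lemma kernel_bound {α : Type*} [MeasurableSpace α] (μ : Measure α) [SFinite μ]
    (K : α × α → ℝ) (hK : AEStronglyMeasurable K (μ.prod μ)) (v : α → ℝ)
    (hv : AEStronglyMeasurable v μ) :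
    eLpNorm (fun u => ∫ y, K (u, y) * v y ∂μ) 2 μ
      ≤ eLpNorm K 2 (μ.prod μ) * eLpNorm v 2 μ := by
  have h2 : ((2 : ℝ≥0∞)).toReal = (2 : ℝ) := by norm_num
  have hconj : (2 : ℝ).HolderConjugate 2 := Real.HolderConjugate.two_two
  set A : ℝ≥0∞ := (∫⁻ y, (‖v y‖₊ : ℝ≥0∞) ^ (2 : ℝ) ∂μ) ^ (1 / 2 : ℝ) with hA
  have hKmeas : AEMeasurable (fun z : α × α => (‖K z‖₊ : ℝ≥0∞) ^ (2 : ℝ)) (μ.prod μ) :=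
    hK.enorm.pow_const _
  have key : ∀ᵐ u ∂μ, (‖∫ y, K (u, y) * v y ∂μ‖₊ : ℝ≥0∞) ^ (2 : ℝ)
      ≤ (∫⁻ y, (‖K (u, y)‖₊ : ℝ≥0∞) ^ (2 : ℝ) ∂μ) * A ^ (2 : ℝ) := by
    filter_upwards [hK.prodMk_left] with u hu
    have step1 : (‖∫ y, K (u, y) * v y ∂μ‖₊ : ℝ≥0∞)
        ≤ (∫⁻ y, (‖K (u, y)‖₊ : ℝ≥0∞) ^ (2 : ℝ) ∂μ) ^ (1 / 2 : ℝ) * A := by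
      calc (‖∫ y, K (u, y) * v y ∂μ‖₊ : ℝ≥0∞)
          ≤ ∫⁻ y, (‖K (u, y) * v y‖₊ : ℝ≥0∞) ∂μ :=
            enorm_integral_le_lintegral_enorm _
        _ = ∫⁻ y, ((fun y => (‖K (u, y)‖₊ : ℝ≥0∞)) * fun y => (‖v y‖₊ : ℝ≥0∞)) y ∂μ := by
            simp [nnnorm_mul, ENNReal.coe_mul]
        _ ≤ (∫⁻ y, (‖K (u, y)‖₊ : ℝ≥0∞) ^ (2 : ℝ) ∂μ) ^ (1 / 2 : ℝ) * A :=
            ENNReal.lintegral_mul_le_Lp_mul_Lq μ hconj hu.enorm hv.enorm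
    calc (‖∫ y, K (u, y) * v y ∂μ‖₊ : ℝ≥0∞) ^ (2 : ℝ)
        ≤ ((∫⁻ y, (‖K (u, y)‖₊ : ℝ≥0∞) ^ (2 : ℝ) ∂μ) ^ (1 / 2 : ℝ) * A) ^ (2 : ℝ) :=
          ENNReal.rpow_le_rpow step1 (by norm_num)
      _ = (∫⁻ y, (‖K (u, y)‖₊ : ℝ≥0∞) ^ (2 : ℝ) ∂μ) * A ^ (2 : ℝ) := by
          rw [ENNReal.mul_rpow_of_nonneg _ _ (by norm_num : (0:ℝ) ≤ 2),
            ← ENNReal.rpow_mul]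
          norm_num
  have hinner : AEMeasurable (fun u => ∫⁻ y, (‖K (u, y)‖₊ : ℝ≥0∞) ^ (2 : ℝ) ∂μ) μ :=
    aux_aemeasurable_lintegral_prod_right μ μ _ hKmeas
  have main : ∫⁻ u, (‖∫ y, K (u, y) * v y ∂μ‖₊ : ℝ≥0∞) ^ (2 : ℝ) ∂μ
      ≤ (∫⁻ z, (‖K z‖₊ : ℝ≥0∞) ^ (2 : ℝ) ∂(μ.prod μ)) * A ^ (2 : ℝ) := by
    calc ∫⁻ u, (‖∫ y, K (u, y) * v y ∂μ‖₊ : ℝ≥0∞) ^ (2 : ℝ) ∂μ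
        ≤ ∫⁻ u, (∫⁻ y, (‖K (u, y)‖₊ : ℝ≥0∞) ^ (2 : ℝ) ∂μ) * A ^ (2 : ℝ) ∂μ :=
          lintegral_mono_ae key
      _ = (∫⁻ u, ∫⁻ y, (‖K (u, y)‖₊ : ℝ≥0∞) ^ (2 : ℝ) ∂μ ∂μ) * A ^ (2 : ℝ) :=
          lintegral_mul_const'' _ hinner
      _ = (∫⁻ z, (‖K z‖₊ : ℝ≥0∞) ^ (2 : ℝ) ∂(μ.prod μ)) * A ^ (2 : ℝ) := by
          rw [MeasureTheory.lintegral_prod _ hKmeas]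
  rw [eLpNorm_eq_lintegral_rpow_enorm_toReal (by norm_num) (by norm_num),
    eLpNorm_eq_lintegral_rpow_enorm_toReal (by norm_num) (by norm_num) (f := K),
    eLpNorm_eq_lintegral_rpow_enorm_toReal (by norm_num) (by norm_num) (f := v), h2]
  calc (∫⁻ u, (‖∫ y, K (u, y) * v y ∂μ‖₊ : ℝ≥0∞) ^ (2 : ℝ) ∂μ) ^ (1 / 2 : ℝ)
      ≤ ((∫⁻ z, (‖K z‖₊ : ℝ≥0∞) ^ (2 : ℝ) ∂(μ.prod μ)) * A ^ (2 : ℝ)) ^ (1 / 2 : ℝ) :=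
        ENNReal.rpow_le_rpow main (by norm_num)
    _ = (∫⁻ z, (‖K z‖₊ : ℝ≥0∞) ^ (2 : ℝ) ∂(μ.prod μ)) ^ (1 / 2 : ℝ) * A := by
        rw [ENNReal.mul_rpow_of_nonneg _ _ (by norm_num : (0:ℝ) ≤ 1/2),
          ← ENNReal.rpow_mul]
        norm_num

/-- In the contraction regime, if moreover `φ` is bounded by `Lφ`, the
hidden state satisfies `‖h‖₂ ≤ 1 + ‖W_in‖₂ ‖x‖₂ + ‖ξ‖₂`. -/
theorem stmt_5 (p : ℕ) [Fact p.Prime]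
    (W Win : ℤ_[p] × ℤ_[p] → ℝ) (x ξ : ℤ_[p] → ℝ)
    (hW : MemLp W 2 ((padicHaar p).prod (padicHaar p)))
    (hWin : MemLp Win 2 ((padicHaar p).prod (padicHaar p)))
    (hx : MemLp x 2 (padicHaar p)) (hξ : MemLp ξ 2 (padicHaar p))
    (φ : ℝ → ℝ) (Lφ : ℝ≥0) (hφ : LipschitzWith Lφ φ) (hφ0 : φ 0 = 0)
    (hφbdd : ∀ s : ℝ, |φ s| ≤ Lφ)
    (hpos : 0 < (Lφ : ℝ≥0∞) * eLpNorm W 2 ((padicHaar p).prod (padicHaar p)))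
    (hlt : (Lφ : ℝ≥0∞) * eLpNorm W 2 ((padicHaar p).prod (padicHaar p)) < 1)
    (h : ℤ_[p] → ℝ) (hh : MemLp h 2 (padicHaar p))
    (hfix : ∀ᵐ u ∂(padicHaar p),
      h u = ∫ y, W (u, y) * φ (h y) ∂(padicHaar p)
          + ∫ y, Win (u, y) * x y ∂(padicHaar p) + ξ u) :
    eLpNorm h 2 (padicHaar p)
      ≤ 1 + eLpNorm Win 2 ((padicHaar p).prod (padicHaar p)) * eLpNorm x 2 (padicHaar p)
          + eLpNorm ξ 2 (padicHaar p) := by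
  haveI : IsProbabilityMeasure (padicHaar p) := padicHaar_prob p
  set μ := padicHaar p
  -- measurability of the ingredients
  have hφh : AEStronglyMeasurable (fun y => φ (h y)) μ :=
    hφ.continuous.comp_aestronglyMeasurable hh.aestronglyMeasurable
  have hsnd : Measure.QuasiMeasurePreserving (Prod.snd : ℤ_[p] × ℤ_[p] → ℤ_[p])
      (μ.prod μ) μ := Measure.quasiMeasurePreserving_snd
  set G1 : ℤ_[p] → ℝ := fun u => ∫ y, W (u, y) * φ (h y) ∂μ with hG1
  set G2 : ℤ_[p] → ℝ := fun u => ∫ y, Win (u, y) * x y ∂μ with hG2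
  have hG1m : AEStronglyMeasurable G1 μ := by
    exact (hW.aestronglyMeasurable.mul
      (hφh.comp_quasiMeasurePreserving hsnd)).integral_prod_right'
  have hG2m : AEStronglyMeasurable G2 μ := by
    exact (hWin.aestronglyMeasurable.mul
      (hx.aestronglyMeasurable.comp_quasiMeasurePreserving hsnd)).integral_prod_right'
  -- bound on G1
  have hφnorm : eLpNorm (fun y => φ (h y)) 2 μ ≤ (Lφ : ℝ≥0∞) := by
    have := eLpNorm_le_of_ae_bound (μ := μ) (p := 2) (f := fun y => φ (h y))
      (C := (Lφ : ℝ)) (Filter.Eventually.of_forall fun y => by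
        simpa [Real.norm_eq_abs] using hφbdd (h y))
    simpa [measure_univ, ENNReal.ofReal_coe_nnreal] using this
  have hG1bound : eLpNorm G1 2 μ ≤ 1 := by
    calc eLpNorm G1 2 μ
        ≤ eLpNorm W 2 (μ.prod μ) * eLpNorm (fun y => φ (h y)) 2 μ :=
          kernel_bound μ W hW.aestronglyMeasurable _ hφh
      _ ≤ eLpNorm W 2 (μ.prod μ) * (Lφ : ℝ≥0∞) := by
          exact mul_le_mul_right hφnorm _
      _ = (Lφ : ℝ≥0∞) * eLpNorm W 2 (μ.prod μ) := mul_comm _ _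
      _ ≤ 1 := hlt.le
  have hG2bound : eLpNorm G2 2 μ ≤ eLpNorm Win 2 (μ.prod μ) * eLpNorm x 2 μ :=
    kernel_bound μ Win hWin.aestronglyMeasurable x hx.aestronglyMeasurable
  -- triangle inequality
  have heq : eLpNorm h 2 μ = eLpNorm (G1 + G2 + ξ) 2 μ := by
    apply eLpNorm_congr_ae
    filter_upwards [hfix] with u hu
    simpa [hG1, hG2] using hu
  rw [heq]
  calc eLpNorm (G1 + G2 + ξ) 2 μ
      ≤ eLpNorm (G1 + G2) 2 μ + eLpNorm ξ 2 μ :=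
        eLpNorm_add_le (hG1m.add hG2m) hξ.aestronglyMeasurable one_le_two
    _ ≤ eLpNorm G1 2 μ + eLpNorm G2 2 μ + eLpNorm ξ 2 μ := by
        exact add_le_add_left (eLpNorm_add_le hG1m hG2m one_le_two) _
    _ ≤ 1 + eLpNorm Win 2 (μ.prod μ) * eLpNorm x 2 μ + eLpNorm ξ 2 μ := by
        exact add_le_add_left (add_le_add hG1bound hG2bound) _
end

section
/- Let φ(s) = (|s+1| − |s−1|)/2 for s ∈ ℝ, let a > 1 and c ∈ ℝ. Then a real number h satisfies h = a·φ(h) + c if and only if one of the following holds: (1) h = a + c and c ≥ 1 − a; (2) h = −a + c and c ≤ a − 1; (3) h = c/(1 − a) and |c| ≤ a − 1. In particular, for |c| < a − 1 the equation has exactly three solutions (the network has multiple states beyond the critical parameter a = 1). -/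
/-- The piecewise-linear sigmoid activation `φ(s) = (|s + 1| − |s − 1|)/2`. -/
noncomputable def plSigmoid (s : ℝ) : ℝ := (|s + 1| - |s - 1|) / 2

lemma plSigmoid_of_ge {s : ℝ} (h : 1 ≤ s) : plSigmoid s = 1 := by
  unfold plSigmoid
  rw [abs_of_nonneg (by linarith), abs_of_nonneg (by linarith)]
  ring

lemma plSigmoid_of_le {s : ℝ} (h : s ≤ -1) : plSigmoid s = -1 := by
  unfold plSigmoid
  rw [abs_of_nonpos (by linarith), abs_of_nonpos (by linarith)]
  ring

lemma plSigmoid_of_abs_le {s : ℝ} (h : |s| ≤ 1) : plSigmoid s = s := by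
  rw [abs_le] at h
  unfold plSigmoid
  rw [abs_of_nonneg (by linarith [h.1]), abs_of_nonpos (by linarith [h.2])]
  ring

/-- For `a > 1` and `c ∈ ℝ`, a real number `h` satisfies
`h = a φ(h) + c` iff `h = a + c` with `c ≥ 1 − a`, or `h = −a + c` with `c ≤ a − 1`, or
`h = c/(1 − a)` with `|c| ≤ a − 1`. In particular, for `|c| < a − 1` the equation has
exactly three solutions. -/
theorem stmt_17 (a c : ℝ) (ha : 1 < a) :
    (∀ h : ℝ, h = a * plSigmoid h + c ↔
      (h = a + c ∧ 1 - a ≤ c) ∨ (h = -a + c ∧ c ≤ a - 1) ∨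
      (h = c / (1 - a) ∧ |c| ≤ a - 1)) ∧
    (|c| < a - 1 → {h : ℝ | h = a * plSigmoid h + c}.ncard = 3) := by
  have hne : (1 : ℝ) - a ≠ 0 := by linarith
  have main : ∀ h : ℝ, h = a * plSigmoid h + c ↔
      (h = a + c ∧ 1 - a ≤ c) ∨ (h = -a + c ∧ c ≤ a - 1) ∨
      (h = c / (1 - a) ∧ |c| ≤ a - 1) := by
    intro h
    constructor
    · intro hh
      rcases le_or_gt 1 h with h1 | h1
      · rw [plSigmoid_of_ge h1] at hh
        exact Or.inl ⟨by linarith, by nlinarith⟩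
      · rcases le_or_gt h (-1) with h2 | h2
        · rw [plSigmoid_of_le h2] at hh
          exact Or.inr (Or.inl ⟨by linarith, by nlinarith⟩)
        · have habs : |h| ≤ 1 := abs_le.mpr ⟨by linarith, by linarith⟩
          rw [plSigmoid_of_abs_le habs] at hh
          have hc : c = h * (1 - a) := by linarith
          refine Or.inr (Or.inr ⟨?_, ?_⟩)
          · field_simp [hc]
            exact hc.symm
          · rw [hc, abs_mul, abs_of_nonpos (by linarith : (1:ℝ) - a ≤ 0)]
            nlinarith [abs_nonneg h]
    · rintro (⟨rfl, hle⟩ | ⟨rfl, hle⟩ | ⟨rfl, hle⟩)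
      · rw [plSigmoid_of_ge (by linarith)]; ring
      · rw [plSigmoid_of_le (by linarith)]; ring
      · have habs : |c / (1 - a)| ≤ 1 := by
          rw [abs_div, abs_of_nonpos (by linarith : (1:ℝ) - a ≤ 0)]
          rw [div_le_one (by linarith)]
          linarith
        rw [plSigmoid_of_abs_le habs]
        field_simp
        ring
  refine ⟨main, fun hc => ?_⟩
  have hset : {h : ℝ | h = a * plSigmoid h + c} = {a + c, -a + c, c / (1 - a)} := by
    ext h
    simp only [Set.mem_setOf_eq, Set.mem_insert_iff, Set.mem_singleton_iff, main h]
    have h1 : 1 - a ≤ c := by cases abs_lt.mp hc; linarith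
    have h2 : c ≤ a - 1 := by cases abs_lt.mp hc; linarith
    have h3 : |c| ≤ a - 1 := le_of_lt hc
    tauto
  rw [hset]
  have habs : |c / (1 - a)| < 1 := by
    rw [abs_div, abs_of_nonpos (by linarith : (1:ℝ) - a ≤ 0), div_lt_one (by linarith)]
    linarith
  rw [abs_lt] at habs
  have d1 : a + c ≠ -a + c := by intro h; linarith [(by linarith : (0:ℝ) < a)]
  have d2 : a + c ≠ c / (1 - a) := by
    intro h
    have h1 : 1 - a ≤ c := by cases abs_lt.mp hc; linarith
    have : (1:ℝ) < a + c := by linarith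
    linarith [habs.2, h ▸ this]
  have d3 : -a + c ≠ c / (1 - a) := by
    intro h
    have h2 : c ≤ a - 1 := by cases abs_lt.mp hc; linarith
    have : -a + c < -1 := by linarith
    linarith [habs.1, h ▸ this]
  rw [Set.ncard_insert_of_notMem (by simp [d1, d2]), Set.ncard_insert_of_notMem (by simp [d3]),
    Set.ncard_singleton]
end
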